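/- Let m and h be positive integers satisfying Condition (O), set n = 2^m − 1 and A = {0,1,...,2^h − 1}. Then for every i ∈ A the cardinality of the 2-cyclotomic coset C_{i+2^{m−h}} modulo n lies in {m/3, m/2, m}. Moreover, if one of the following holds: (i) gcd(6,m) = 1; (ii) gcd(6,m) = 2 and 4h ≤ m; (iii) gcd(6,m) = 3 and 3h ≤ m; (iv) gcd(6,m) = 6 and 4h ≤ m, then |C_{i+2^{m−h}}| = m for every i ∈ A. -/

import Mathlib

/-- The 2-cyclotomic coset of `j` modulo `n`. -/
def cycCoset (n j : ℕ) : Set ℕ := {x | ∃ k : ℕ, x = j * 2 ^ k % n}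

private lemma pow_dvd_aux {a b : ℕ} (hab : a ∣ b) : 2 ^ a - 1 ∣ 2 ^ b - 1 := by
  obtain ⟨q, rfl⟩ := hab
  calc 2 ^ a - 1 ∣ (2 ^ a) ^ q - 1 ^ q := Nat.sub_dvd_pow_sub_pow _ 1 q
  _ = 2 ^ (a * q) - 1 := by rw [← pow_mul, one_pow]

private lemma dvd_step {n j d : ℕ} (hdvd : n ∣ j * (2 ^ d - 1)) (q : ℕ) :
    n ∣ j * (2 ^ (d * q) - 1) := by
  obtain ⟨c, hc⟩ := pow_dvd_aux (Dvd.intro q rfl : d ∣ d * q)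
  rw [hc, ← mul_assoc]
  exact hdvd.mul_right c

private lemma modeq_pow {n j d : ℕ} (hdvd : n ∣ j * (2 ^ d - 1)) (q : ℕ) :
    j * 2 ^ (d * q) ≡ j [MOD n] := by
  have h2 := dvd_step hdvd q
  have h3 : j ≤ j * 2 ^ (d * q) := Nat.le_mul_of_pos_right _ (Nat.pow_pos (by norm_num))
  have h4 : j * 2 ^ (d * q) - j = j * (2 ^ (d * q) - 1) := by
    rw [Nat.mul_sub, mul_one]
  exact ((Nat.modEq_iff_dvd' h3).mpr (h4 ▸ h2)).symm

private lemma coset_ncard {n j d : ℕ} (hn : Odd n) (hd : 0 < d)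
    (hdvd : n ∣ j * (2 ^ d - 1))
    (hmin : ∀ k, 0 < k → k < d → ¬ n ∣ j * (2 ^ k - 1)) :
    (cycCoset n j).ncard = d := by
  have hcop2 : Nat.Coprime 2 n := (Nat.Prime.coprime_iff_not_dvd Nat.prime_two).mpr
    (by rw [Nat.two_dvd_ne_zero]; exact Nat.odd_iff.mp hn)
  have key : ∀ k, j * 2 ^ k % n = j * 2 ^ (k % d) % n := by
    intro k
    conv_lhs => rw [← Nat.div_add_mod k d]
    have h1 : j * 2 ^ (d * (k / d)) * 2 ^ (k % d) ≡ j * 2 ^ (k % d) [MOD n] :=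
      (modeq_pow hdvd (k / d)).mul_right _
    calc j * 2 ^ (d * (k / d) + k % d) % n
        = j * 2 ^ (d * (k / d)) * 2 ^ (k % d) % n := by rw [pow_add, mul_assoc]
      _ = j * 2 ^ (k % d) % n := h1
  have inj : ∀ a b, a < b → b < d → j * 2 ^ a % n = j * 2 ^ b % n → False := by
    intro a b hab hbd hfe
    have h2 : 2 ^ b = 2 ^ a * 2 ^ (b - a) := by rw [← pow_add]; congr 1; omega
    have h3 : 2 ^ a * j ≡ 2 ^ a * (j * 2 ^ (b - a)) [MOD n] := by
      have e1 : 2 ^ a * j = j * 2 ^ a := mul_comm _ _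
      have e2 : 2 ^ a * (j * 2 ^ (b - a)) = j * 2 ^ b := by rw [h2]; ring
      rw [e1, e2]; exact hfe
    have hcop : Nat.gcd n (2 ^ a) = 1 := ((hcop2.pow_left a).symm : Nat.Coprime n (2 ^ a))
    have h4 : j ≡ j * 2 ^ (b - a) [MOD n] := Nat.ModEq.cancel_left_of_coprime hcop h3
    have h5 : j ≤ j * 2 ^ (b - a) := Nat.le_mul_of_pos_right _ (Nat.pow_pos (by norm_num))
    have h6 : n ∣ j * (2 ^ (b - a) - 1) := by
      have := (Nat.modEq_iff_dvd' h5).mp h4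
      rwa [show j * 2 ^ (b - a) - j = j * (2 ^ (b - a) - 1) by rw [Nat.mul_sub, mul_one]] at this
    exact hmin (b - a) (by omega) (by omega) h6
  have hset : cycCoset n j = ↑((Finset.range d).image (fun k => j * 2 ^ k % n)) := by
    ext x
    simp only [cycCoset, Set.mem_setOf_eq, Finset.coe_image, Set.mem_image, Finset.mem_coe,
      Finset.mem_range]
    constructor
    · rintro ⟨k, rfl⟩
      exact ⟨k % d, Nat.mod_lt _ hd, (key k).symm⟩
    · rintro ⟨k, hk, hx⟩
      exact ⟨k, hx.symm⟩
  rw [hset, Set.ncard_coe_finset,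
    Finset.card_image_of_injOn, Finset.card_range]
  intro a ha b hb hab
  simp only [Finset.coe_range, Set.mem_Iio] at ha hb
  rcases Nat.lt_trichotomy a b with hlt | heq | hlt
  · exact absurd (inj a b hlt hb hab) (not_false)
  · exact heq
  · exact absurd (inj b a hlt ha hab.symm) (not_false)

private lemma find_dvd {n j m d : ℕ} (hm : 0 < m) (hcop2 : Nat.Coprime 2 n)
    (hdvd : n ∣ j * (2 ^ d - 1)) (hm' : n ∣ j * (2 ^ m - 1)) (hd : 0 < d)
    (hmin : ∀ k, 0 < k → k < d → ¬ n ∣ j * (2 ^ k - 1)) : d ∣ m := by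
  set r := m % d with hr
  set q := m / d with hq
  rcases Nat.eq_zero_or_pos r with h0 | hrpos
  · exact Nat.dvd_of_mod_eq_zero h0
  exfalso
  have hdq : n ∣ j * (2 ^ (d * q) - 1) := dvd_step hdvd q
  have hsplit : j * (2 ^ m - 1) = 2 ^ (d * q) * (j * (2 ^ r - 1)) + j * (2 ^ (d * q) - 1) := by
    have hmq : m = d * q + r := (Nat.div_add_mod m d).symm
    have e1 : 2 ^ m = 2 ^ (d * q) * 2 ^ r := by rw [← pow_add, ← hmq]
    have h1 : (1:ℕ) ≤ 2 ^ (d * q) := Nat.one_le_two_pow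
    have h2 : (1:ℕ) ≤ 2 ^ r := Nat.one_le_two_pow
    have e2 : 2 ^ (d * q) * (2 ^ r - 1) = 2 ^ (d * q) * 2 ^ r - 2 ^ (d * q) := by rw [Nat.mul_sub, mul_one]
    have h3 : 2 ^ (d * q) ≤ 2 ^ (d * q) * 2 ^ r := Nat.le_mul_of_pos_right _ (by omega)
    have e3 : 2 ^ m - 1 = 2 ^ (d * q) * (2 ^ r - 1) + (2 ^ (d * q) - 1) := by
      rw [e1, e2]; omega
    rw [e3, Nat.mul_add]
    ring
  have hfirst : n ∣ 2 ^ (d * q) * (j * (2 ^ r - 1)) := by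
    have := Nat.dvd_sub hm' hdq
    rwa [hsplit, Nat.add_sub_cancel] at this
  have hc : Nat.Coprime n (2 ^ (d * q)) := ((hcop2.pow_left _).symm)
  have := hc.dvd_of_dvd_mul_left hfirst
  exact hmin r hrpos (Nat.mod_lt _ hd) this

private lemma excl_generic {m h e i : ℕ} (hh : 1 ≤ h) (he1 : 1 ≤ e) (he4 : 4 * e ≤ m)
    (hhm : 2 * h + 1 ≤ m) (h4h : m ≤ 4 * h) (hi : i < 2 ^ h) :
    ¬ (2 ^ m - 1 ∣ (i + 2 ^ (m - h)) * (2 ^ e - 1)) := by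
  intro hdvd
  have heh : e ≤ h := by omega
  have he2 : (1:ℕ) ≤ 2 ^ e := Nat.one_le_two_pow
  have hj : (0:ℕ) < i + 2 ^ (m - h) := by positivity
  have hpos : 0 < (i + 2 ^ (m - h)) * (2 ^ e - 1) := by
    have : (2:ℕ) ≤ 2 ^ e := by calc (2:ℕ) = 2^1 := (pow_one 2).symm
                                  _ ≤ 2 ^ e := Nat.pow_le_pow_right (by norm_num) he1
    exact Nat.mul_pos hj (by omega)
  -- key bound: j * 2^e + 2 ≤ 2^m + j
  have hkey : (i + 2 ^ (m - h)) * 2 ^ e + 2 ≤ 2 ^ m + (i + 2 ^ (m - h)) := by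
    rcases Nat.lt_or_ge e h with hlt | hge
    · -- e < h
      have b1 : i * 2 ^ e ≤ 2 ^ (h + e) - 2 ^ e := by
        have : i * 2 ^ e ≤ (2 ^ h - 1) * 2 ^ e := Nat.mul_le_mul_right _ (by omega)
        rwa [Nat.sub_mul, one_mul, ← pow_add] at this
      have b2 : h + e ≤ m - 2 := by omega
      have b3 : 2 ^ (h + e) ≤ 2 ^ (m - 2) := Nat.pow_le_pow_right (by norm_num) b2
      have b4 : 2 ^ (m - h) * 2 ^ e = 2 ^ (m - h + e) := by rw [← pow_add]
      have b5 : m - h + e ≤ m - 1 := by omega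
      have b6 : 2 ^ (m - h + e) ≤ 2 ^ (m - 1) := Nat.pow_le_pow_right (by norm_num) b5
      have b7 : 2 ^ (m - 2) + 2 ^ (m - 1) ≤ 2 ^ m := by
        have e1 : 2 ^ m = 2 ^ (m - 2) * 4 := by
          rw [show m = (m - 2) + 2 by omega, pow_add]; norm_num
        have e2 : 2 ^ (m - 1) = 2 ^ (m - 2) * 2 := by
          rw [show m - 1 = (m - 2) + 1 by omega, pow_add]; norm_num
        omega
      have b8 : (2:ℕ) ≤ 2 ^ e := by
        calc (2:ℕ) = 2^1 := (pow_one 2).symm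
          _ ≤ 2 ^ e := Nat.pow_le_pow_right (by norm_num) he1
      calc (i + 2 ^ (m - h)) * 2 ^ e + 2 = i * 2 ^ e + 2 ^ (m - h) * 2 ^ e + 2 := by ring
        _ ≤ (2 ^ (h + e) - 2 ^ e) + 2 ^ (m - h + e) + 2 := by rw [b4] at *; omega
        _ ≤ 2 ^ m + (i + 2 ^ (m - h)) := by
            have hf : 2 ^ (m - h) ≤ 2 ^ (m - 1) := Nat.pow_le_pow_right (by norm_num) (by omega)
            have h1 : (1:ℕ) ≤ 2 ^ (m - 2) := Nat.one_le_two_pow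
            omega
    · -- e = h
      have heq : e = h := le_antisymm heh hge
      subst heq
      have b1 : 2 ^ (m - e) * 2 ^ e = 2 ^ m := by
        rw [← pow_add]; congr 1; omega
      have b2 : i * 2 ^ e ≤ 2 ^ (2 * e) - 2 ^ e := by
        have : i * 2 ^ e ≤ (2 ^ e - 1) * 2 ^ e := Nat.mul_le_mul_right _ (by omega)
        rwa [Nat.sub_mul, one_mul, ← pow_add, show e + e = 2 * e by ring] at this
      have b3 : 2 * e ≤ m - e := by omega
      have b4 : 2 ^ (2 * e) ≤ 2 ^ (m - e) := Nat.pow_le_pow_right (by norm_num) b3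
      have b5 : (2:ℕ) ≤ 2 ^ e := by
        calc (2:ℕ) = 2^1 := (pow_one 2).symm
          _ ≤ 2 ^ e := Nat.pow_le_pow_right (by norm_num) he1
      calc (i + 2 ^ (m - e)) * 2 ^ e + 2 = i * 2 ^ e + 2 ^ (m - e) * 2 ^ e + 2 := by ring
        _ ≤ (2 ^ (2 * e) - 2 ^ e) + 2 ^ m + 2 := by omega
        _ ≤ 2 ^ m + (i + 2 ^ (m - e)) := by
            have hb : 2 ^ e ≤ 2 ^ (2 * e) := Nat.pow_le_pow_right (by norm_num) (by omega)
            omega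
  have hlt : (i + 2 ^ (m - h)) * (2 ^ e - 1) < 2 ^ m - 1 := by
    have e1 : (i + 2 ^ (m - h)) * (2 ^ e - 1) = (i + 2 ^ (m - h)) * 2 ^ e - (i + 2 ^ (m - h)) := by
      rw [Nat.mul_sub, mul_one]
    have e2 : (i + 2 ^ (m - h)) ≤ (i + 2 ^ (m - h)) * 2 ^ e :=
      Nat.le_mul_of_pos_right _ (by omega)
    omega
  exact absurd (Nat.le_of_dvd hpos hdvd) (not_le.mpr (by omega))

private lemma excl_half {h i : ℕ} (hh : 1 ≤ h) (hi : i < 2 ^ h) :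
    ¬ (2 ^ (4 * h) - 1 ∣ (i + 2 ^ (3 * h)) * (2 ^ (2 * h) - 1)) := by
  intro hd
  have h1 : (1:ℕ) ≤ 2 ^ (2 * h) := Nat.one_le_two_pow
  have h4 : (1:ℕ) ≤ 2 ^ (4 * h) := Nat.one_le_two_pow
  have factor : 2 ^ (4 * h) - 1 = (2 ^ (2 * h) + 1) * (2 ^ (2 * h) - 1) := by
    have e1 : (2:ℤ) ^ (4 * h) = 2 ^ (2 * h) * 2 ^ (2 * h) := by
      rw [← pow_add]; congr 1; ring
    zify [h1, h4]
    rw [e1]; ring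
  rw [factor] at hd
  have hd2 : (2 ^ (2 * h) + 1) ∣ (i + 2 ^ (3 * h)) := by
    have h2 : (2:ℕ) ≤ 2 ^ (2 * h) := by
      calc (2:ℕ) = 2 ^ 1 := (pow_one 2).symm
        _ ≤ 2 ^ (2 * h) := Nat.pow_le_pow_right (by norm_num) (by omega)
    exact (Nat.mul_dvd_mul_iff_right (show 0 < 2 ^ (2 * h) - 1 by omega)).mp hd
  have hd3 : (2 ^ (2 * h) + 1) ∣ 2 ^ (3 * h) + 2 ^ h := by
    refine ⟨2 ^ h, ?_⟩
    rw [add_mul, one_mul, ← pow_add]; congr 2; ring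
  have hd4 : (2 ^ (2 * h) + 1) ∣ 2 ^ h - i := by
    have e : 2 ^ h - i = (2 ^ (3 * h) + 2 ^ h) - (i + 2 ^ (3 * h)) := by omega
    rw [e]; exact Nat.dvd_sub hd3 hd2
  have hlt : 2 ^ h - i < 2 ^ (2 * h) + 1 := by
    have : (2:ℕ) ^ h ≤ 2 ^ (2 * h) := Nat.pow_le_pow_right (by norm_num) (by omega)
    omega
  have hpos : 0 < 2 ^ h - i := by omega
  exact absurd (Nat.le_of_dvd hpos hd4) (by omega)

private lemma excl_third {t h i : ℕ} (hh : 1 ≤ h) (hht : h ≤ t) (hi : i < 2 ^ h) :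
    ¬ (2 ^ (3 * t) - 1 ∣ (i + 2 ^ (3 * t - h)) * (2 ^ t - 1)) := by
  intro hd
  have h1 : (1:ℕ) ≤ 2 ^ t := Nat.one_le_two_pow
  have h3 : (1:ℕ) ≤ 2 ^ (3 * t) := Nat.one_le_two_pow
  have factor : 2 ^ (3 * t) - 1 = (2 ^ (2 * t) + 2 ^ t + 1) * (2 ^ t - 1) := by
    have e1 : (2:ℤ) ^ (3 * t) = 2 ^ t * 2 ^ t * 2 ^ t := by
      rw [← pow_add, ← pow_add]; congr 1; ring
    have e2 : (2:ℤ) ^ (2 * t) = 2 ^ t * 2 ^ t := by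
      rw [← pow_add]; congr 1; ring
    zify [h1, h3]
    rw [e1, e2]; ring
  rw [factor] at hd
  have h2 : (2:ℕ) ≤ 2 ^ t := by
    calc (2:ℕ) = 2 ^ 1 := (pow_one 2).symm
      _ ≤ 2 ^ t := Nat.pow_le_pow_right (by norm_num) (by omega)
  have hd2 : (2 ^ (2 * t) + 2 ^ t + 1) ∣ (i + 2 ^ (3 * t - h)) :=
    (Nat.mul_dvd_mul_iff_right (show 0 < 2 ^ t - 1 by omega)).mp hd
  obtain ⟨r, hr⟩ : ∃ r, r = t - h := ⟨t - h, rfl⟩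
  have hmh : 3 * t - h = 2 * t + r := by omega
  have hd3 : (2 ^ (2 * t) + 2 ^ t + 1) ∣ 2 ^ (2 * t + r) + 2 ^ (t + r) + 2 ^ r := by
    refine ⟨2 ^ r, ?_⟩
    rw [add_mul, add_mul, one_mul, ← pow_add, ← pow_add]
  have hd4 : (2 ^ (2 * t) + 2 ^ t + 1) ∣ 2 ^ (t + r) + 2 ^ r - i := by
    have hile : i ≤ 2 ^ (t + r) := by
      calc i ≤ 2 ^ h := le_of_lt hi
        _ ≤ 2 ^ (t + r) := Nat.pow_le_pow_right (by norm_num) (by omega)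
    have e : 2 ^ (t + r) + 2 ^ r - i
        = (2 ^ (2 * t + r) + 2 ^ (t + r) + 2 ^ r) - (i + 2 ^ (3 * t - h)) := by
      rw [hmh]; omega
    rw [e]; exact Nat.dvd_sub hd3 hd2
  have hgr : (1:ℕ) ≤ 2 ^ r := Nat.one_le_two_pow
  have hpos : 0 < 2 ^ (t + r) + 2 ^ r - i := by
    have : i < 2 ^ (t + r) := by
      calc i < 2 ^ h := hi
        _ ≤ 2 ^ (t + r) := Nat.pow_le_pow_right (by norm_num) (by omega)
    omega
  have hlt : 2 ^ (t + r) + 2 ^ r - i < 2 ^ (2 * t) + 2 ^ t + 1 := by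
    have b1 : 2 ^ (t + r) ≤ 2 ^ (2 * t - 1) := Nat.pow_le_pow_right (by norm_num) (by omega)
    have b2 : 2 ^ r ≤ 2 ^ (2 * t - 1) := Nat.pow_le_pow_right (by norm_num) (by omega)
    have b3 : 2 ^ (2 * t) = 2 ^ (2 * t - 1) * 2 := by
      rw [← pow_succ]; congr 1; omega
    omega
  exact absurd (Nat.le_of_dvd hpos hd4) (by omega)

theorem stmt_9 (m h : ℕ) (hm : 0 < m) (hh : 0 < h)
    (hO : (m % 4 = 1 → m + 3 ≤ 4 * h ∧ 2 * h ≤ m - 1) ∧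
          (m % 4 = 2 → m + 2 ≤ 4 * h ∧ 2 * h ≤ m - 2) ∧
          (m % 4 = 3 → m + 1 ≤ 4 * h ∧ 2 * h ≤ m - 3) ∧
          (m % 4 = 0 → m ≤ 4 * h ∧ 2 * h ≤ m - 4))
    (n : ℕ) (hn : n = 2 ^ m - 1) :
    (∀ i < 2 ^ h, (cycCoset n (i + 2 ^ (m - h))).ncard ∈ ({m / 3, m / 2, m} : Set ℕ)) ∧
    ((Nat.gcd 6 m = 1 ∨ (Nat.gcd 6 m = 2 ∧ 4 * h ≤ m) ∨ (Nat.gcd 6 m = 3 ∧ 3 * h ≤ m) ∨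
        (Nat.gcd 6 m = 6 ∧ 4 * h ≤ m)) →
      ∀ i < 2 ^ h, (cycCoset n (i + 2 ^ (m - h))).ncard = m) := by
  subst hn
  obtain ⟨hO1, hO2, hO3, hO4⟩ := hO
  have h4h : m ≤ 4 * h := by omega
  have h2h : 2 * h + 1 ≤ m := by omega
  have h2le : (2:ℕ) ≤ 2 ^ m := by
    calc (2:ℕ) = 2 ^ 1 := (pow_one 2).symm
      _ ≤ 2 ^ m := Nat.pow_le_pow_right (by norm_num) hm
  have hdvd2 : 2 ∣ 2 ^ m := dvd_pow_self 2 (by omega)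
  have hodd : Odd (2 ^ m - 1) := by rw [Nat.odd_iff]; omega
  have hcop2 : Nat.Coprime 2 (2 ^ m - 1) := (Nat.Prime.coprime_iff_not_dvd Nat.prime_two).mpr
    (by rw [Nat.two_dvd_ne_zero]; exact Nat.odd_iff.mp hodd)
  have main : ∀ i, i < 2 ^ h → ∃ d,
      (cycCoset (2 ^ m - 1) (i + 2 ^ (m - h))).ncard = d ∧ 0 < d ∧
      (2 ^ m - 1) ∣ (i + 2 ^ (m - h)) * (2 ^ d - 1) ∧
      (d = m ∨ 2 * d = m ∨ 3 * d = m) := by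
    intro i hi
    have hex : ∃ k, 0 < k ∧ (2 ^ m - 1) ∣ (i + 2 ^ (m - h)) * (2 ^ k - 1) :=
      ⟨m, hm, ⟨i + 2 ^ (m - h), by ring⟩⟩
    refine ⟨Nat.find hex, ?_, ?_, ?_, ?_⟩
    · obtain ⟨hd0, hddvd⟩ := Nat.find_spec hex
      exact coset_ncard hodd hd0 hddvd
        (fun k hk0 hkd hkdvd => Nat.find_min hex hkd ⟨hk0, hkdvd⟩)
    · exact (Nat.find_spec hex).1
    · exact (Nat.find_spec hex).2
    · obtain ⟨hd0, hddvd⟩ := Nat.find_spec hex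
      set d := Nat.find hex with hd
      have hmin : ∀ k, 0 < k → k < d → ¬ (2 ^ m - 1) ∣ (i + 2 ^ (m - h)) * (2 ^ k - 1) :=
        fun k hk0 hkd hkdvd => Nat.find_min hex hkd ⟨hk0, hkdvd⟩
      have hdm : d ∣ m := find_dvd hm hcop2 hddvd ⟨i + 2 ^ (m - h), by ring⟩ hd0 hmin
      by_contra htri
      push_neg at htri
      obtain ⟨ht1, ht2, ht3⟩ := htri
      obtain ⟨q, hq⟩ := hdm
      have hq4 : 4 ≤ q := by
        rcases q with _ | _ | _ | _ | q <;> omega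
      have h4d : 4 * d ≤ m := by
        calc 4 * d ≤ q * d := Nat.mul_le_mul_right d hq4
          _ = m := by rw [hq]; ring
      exact excl_generic hh hd0 h4d h2h h4h hi hddvd
  constructor
  · intro i hi
    obtain ⟨d, hcard, hd0, hdvd, htri⟩ := main i hi
    rw [hcard]
    simp only [Set.mem_insert_iff, Set.mem_singleton_iff]
    omega
  · intro hg i hi
    obtain ⟨d, hcard, hd0, hdvd, htri⟩ := main i hi
    rw [hcard]
    rcases htri with rfl | h2 | h3
    · rfl
    · exfalso
      have h2m : 2 ∣ m := ⟨d, h2.symm⟩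
      have half_case : 4 * h ≤ m → False := by
        intro hle
        have e1 : m = 4 * h := by omega
        have e2 : m - h = 3 * h := by omega
        have e3 : d = 2 * h := by omega
        rw [e2, e3, e1] at hdvd
        exact excl_half hh hi hdvd
      rcases hg with hg1 | ⟨hg2, hle⟩ | ⟨hg3, hle⟩ | ⟨hg6, hle⟩
      · have h2g : (2:ℕ) ∣ Nat.gcd 6 m := Nat.dvd_gcd (by norm_num) h2m
        rw [hg1] at h2g
        exact absurd h2g (by norm_num)
      · exact half_case hle
      · have h2g : (2:ℕ) ∣ Nat.gcd 6 m := Nat.dvd_gcd (by norm_num) h2m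
        rw [hg3] at h2g
        exact absurd h2g (by norm_num)
      · exact half_case hle
    · exfalso
      have h3m : 3 ∣ m := ⟨d, h3.symm⟩
      have third_case : h ≤ d → False := by
        intro hhd
        have e2 : m - h = 3 * d - h := by omega
        have e1 : m = 3 * d := by omega
        rw [e2, e1] at hdvd
        exact excl_third hh hhd hi hdvd
      rcases hg with hg1 | ⟨hg2, hle⟩ | ⟨hg3, hle⟩ | ⟨hg6, hle⟩
      · have h3g : (3:ℕ) ∣ Nat.gcd 6 m := Nat.dvd_gcd (by norm_num) h3m
        rw [hg1] at h3g
        exact absurd h3g (by norm_num)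
      · have h3g : (3:ℕ) ∣ Nat.gcd 6 m := Nat.dvd_gcd (by norm_num) h3m
        rw [hg2] at h3g
        exact absurd h3g (by norm_num)
      · exact third_case (by omega)
      · exact third_case (by omega)
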